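/- Let (A, ⦃-,-⦄) be a double Poisson algebra and n a positive integer. Let Aₙ be a commutative K-algebra corepresenting the functor C ↦ Hom_{Alg_K}(A, Mₙ(C)) on commutative K-algebras, with natural bijections Ψ_C : Hom_{Alg_K}(Aₙ, C) → Hom_{Alg_K}(A, Mₙ(C)), let u := Ψ_{Aₙ}(id_{Aₙ}) : A → Mₙ(Aₙ) be the universal representation, and write a_{ij} := (u(a))_{ij} ∈ Aₙ for a ∈ A and 1 ≤ i,j ≤ n. Then: (a) Aₙ is generated as a K-algebra by the elements {a_{ij} : a ∈ A, 1 ≤ i,j ≤ n}; (b) there exists a unique Poisson bracket {-,-} on Aₙ (a K-bilinear antisymmetric bracket satisfying the Jacobi identity and the Leibniz rule {x, yz} = {x,y}z + y{x,z}) such that for all a, b ∈ A and all 1 ≤ i,j,u,v ≤ n, {a_{ij}, b_{uv}} = T_{u,j,i,v}(⦃a,b⦄), where T_{u,j,i,v} : A⊗A → Aₙ is the K-linear map determined by p⊗q ↦ (u(p))_{uj}·(u(q))_{iv}. -/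

import Mathlib

open TensorProduct

noncomputable section

universe u v w

/-- The cyclic permutation `ρ : A⊗A⊗A → A⊗A⊗A`, `(x⊗y)⊗z ↦ (z⊗x)⊗y`. -/
def cyc (K : Type u) [Field K] (A : Type v) [Ring A] [Algebra K A] :
    ((A ⊗[K] A) ⊗[K] A) →ₗ[K] ((A ⊗[K] A) ⊗[K] A) :=
  ((TensorProduct.assoc K A A A).symm.toLinearMap).comp
    ((TensorProduct.comm K (A ⊗[K] A) A).toLinearMap)

/-- A double bracket on the `K`-algebra `A`: a `K`-bilinear map `A × A → A ⊗ A` which is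
antisymmetric with respect to the flip and satisfies the Leibniz rule in its second
argument for the outer bimodule structure on `A ⊗ A`. -/
structure DoubleBracket (K : Type u) (A : Type v) [Field K] [Ring A] [Algebra K A] where
  br : A →ₗ[K] A →ₗ[K] A ⊗[K] A
  antisymm : ∀ x y : A, br y x = - (TensorProduct.comm K A A) (br x y)
  leibniz : ∀ x a b : A, br x (a * b)
      = (TensorProduct.map (LinearMap.mulLeft K a) (LinearMap.id : A →ₗ[K] A)) (br x b)
        + (TensorProduct.map (LinearMap.id : A →ₗ[K] A) (LinearMap.mulRight K b)) (br x a)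

/-- The double Jacobi identity: a double bracket is a double Poisson bracket iff it holds. -/
def DoubleBracket.IsPoisson {K : Type u} {A : Type v} [Field K] [Ring A] [Algebra K A]
    (D : DoubleBracket K A) : Prop :=
  ∀ x y z : A,
    (LinearMap.rTensor A (D.br x)) (D.br y z)
      + cyc K A ((LinearMap.rTensor A (D.br y)) (D.br z x))
      + cyc K A (cyc K A ((LinearMap.rTensor A (D.br z)) (D.br x y))) = 0

/-- The associated bracket `{x,y} = m(⦃x,y⦄)`. -/
def DoubleBracket.ab {K : Type u} {A : Type v} [Field K] [Ring A] [Algebra K A]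
    (D : DoubleBracket K A) (x y : A) : A :=
  LinearMap.mul' K A (D.br x y)

/-- `[A,A]`: the `K`-linear span of all commutators. -/
def commSpan (K : Type u) [Field K] (A : Type v) [Ring A] [Algebra K A] : Submodule K A :=
  Submodule.span K {z : A | ∃ u v : A, z = u * v - v * u}

/-- `K·1 + [A,A]`. -/
def natSub (K : Type u) [Field K] (A : Type v) [Ring A] [Algebra K A] : Submodule K A :=
  Submodule.span K {(1 : A)} ⊔ commSpan K A


section AuxiliaryLemmas

variable {K : Type u} [Field K] {A : Type v} [Ring A] [Algebra K A]
  {An : Type v} [CommRing An] [Algebra K An] {n : ℕ}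

theorem cyc_tmul' (x y z : A) :
    cyc K A ((x ⊗ₜ[K] y) ⊗ₜ[K] z) = (z ⊗ₜ[K] x) ⊗ₜ[K] y := by
  simp [cyc, TensorProduct.comm_tmul, TensorProduct.assoc_symm_tmul]

/-- entry functional `p ⊗ q ↦ U p i1 j1 * U q i2 j2`. -/
def ent (U : A →ₐ[K] Matrix (Fin n) (Fin n) An) (i1 j1 i2 j2 : Fin n) :
    A ⊗[K] A →ₗ[K] An :=
  TensorProduct.lift (LinearMap.mk₂ K (fun p q => U p i1 j1 * U q i2 j2)
    (fun p p' q => by simp only [map_add, Matrix.add_apply, add_mul])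
    (fun c p q => by simp only [map_smul, Matrix.smul_apply, smul_mul_assoc])
    (fun p q q' => by simp only [map_add, Matrix.add_apply, mul_add])
    (fun c p q => by simp only [map_smul, Matrix.smul_apply, mul_smul_comm]))

@[simp] theorem ent_tmul (U : A →ₐ[K] Matrix (Fin n) (Fin n) An) (i1 j1 i2 j2 : Fin n)
    (p q : A) : ent U i1 j1 i2 j2 (p ⊗ₜ[K] q) = U p i1 j1 * U q i2 j2 := rfl

/-- matrix-valued map `w ↦ (Mm U i j w) u v = ent U u j i v w`. -/
def Mm (U : A →ₐ[K] Matrix (Fin n) (Fin n) An) (i j : Fin n) :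
    A ⊗[K] A →ₗ[K] Matrix (Fin n) (Fin n) An :=
  LinearMap.pi (fun u => LinearMap.pi (fun v => ent U u j i v))

@[simp] theorem Mm_apply (U : A →ₐ[K] Matrix (Fin n) (Fin n) An) (i j u v : Fin n)
    (w : A ⊗[K] A) : Mm U i j w u v = ent U u j i v w := rfl

/-- triple functional `(x⊗y)⊗z ↦ U x i1 j1 * U y i2 j2 * U z i3 j3`. -/
def tri (U : A →ₐ[K] Matrix (Fin n) (Fin n) An) (i1 j1 i2 j2 i3 j3 : Fin n) :
    (A ⊗[K] A) ⊗[K] A →ₗ[K] An :=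
  TensorProduct.lift (LinearMap.mk₂ K
    (fun w r => ent U i1 j1 i2 j2 w * U r i3 j3)
    (fun w w' r => by simp only [map_add, add_mul])
    (fun c w r => by simp only [map_smul, smul_mul_assoc])
    (fun w r r' => by simp only [map_add, Matrix.add_apply, mul_add])
    (fun c w r => by simp only [map_smul, Matrix.smul_apply, mul_smul_comm]))

@[simp] theorem tri_tmul (U : A →ₐ[K] Matrix (Fin n) (Fin n) An) (i1 j1 i2 j2 i3 j3 : Fin n)
    (w : A ⊗[K] A) (r : A) :
    tri U i1 j1 i2 j2 i3 j3 (w ⊗ₜ[K] r) = ent U i1 j1 i2 j2 w * U r i3 j3 := rfl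

theorem tri_cyc_tmul (U : A →ₐ[K] Matrix (Fin n) (Fin n) An) (i1 j1 i2 j2 i3 j3 : Fin n)
    (m : A ⊗[K] A) (p : A) :
    tri U i1 j1 i2 j2 i3 j3 (cyc K A (m ⊗ₜ[K] p))
      = U p i1 j1 * ent U i2 j2 i3 j3 m := by
  induction m using TensorProduct.induction_on with
  | zero => simp [TensorProduct.zero_tmul]
  | tmul x y => rw [cyc_tmul', tri_tmul, ent_tmul, ent_tmul, mul_assoc]
  | add w w' hw hw' =>
      rw [TensorProduct.add_tmul, map_add, map_add, hw, hw', map_add, mul_add]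

theorem tri_cyc2_tmul (U : A →ₐ[K] Matrix (Fin n) (Fin n) An) (i1 j1 i2 j2 i3 j3 : Fin n)
    (m : A ⊗[K] A) (p : A) :
    tri U i1 j1 i2 j2 i3 j3 (cyc K A (cyc K A (m ⊗ₜ[K] p)))
      = U p i2 j2 * ent U i3 j3 i1 j1 m := by
  induction m using TensorProduct.induction_on with
  | zero => simp [TensorProduct.zero_tmul]
  | tmul x y =>
      rw [cyc_tmul', cyc_tmul', tri_tmul, ent_tmul, ent_tmul]
      ring
  | add w w' hw hw' =>
      rw [TensorProduct.add_tmul, map_add, map_add, map_add, hw, hw', map_add, mul_add]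

theorem ent_comm (U : A →ₐ[K] Matrix (Fin n) (Fin n) An) (i1 j1 i2 j2 : Fin n)
    (w : A ⊗[K] A) :
    ent U i1 j1 i2 j2 (TensorProduct.comm K A A w) = ent U i2 j2 i1 j1 w := by
  induction w using TensorProduct.induction_on with
  | zero => simp
  | tmul p q => rw [TensorProduct.comm_tmul, ent_tmul, ent_tmul, mul_comm]
  | add w w' hw hw' => rw [map_add, map_add, hw, hw', map_add]

theorem Mm_mapL (U : A →ₐ[K] Matrix (Fin n) (Fin n) An) (b : A) (i j : Fin n)
    (w : A ⊗[K] A) :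
    Mm U i j (TensorProduct.map (LinearMap.mulLeft K b) LinearMap.id w)
      = U b * Mm U i j w := by
  induction w using TensorProduct.induction_on with
  | zero => simp
  | tmul p q =>
      ext s t
      rw [TensorProduct.map_tmul]
      simp only [Mm_apply, ent_tmul, LinearMap.mulLeft_apply, LinearMap.id_apply,
        Matrix.mul_apply, map_mul]
      rw [Finset.sum_mul]
      exact Finset.sum_congr rfl fun k _ => by ring
  | add w w' hw hw' => simp only [map_add, hw, hw', mul_add]

theorem Mm_mapR (U : A →ₐ[K] Matrix (Fin n) (Fin n) An) (c : A) (i j : Fin n)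
    (w : A ⊗[K] A) :
    Mm U i j (TensorProduct.map LinearMap.id (LinearMap.mulRight K c) w)
      = Mm U i j w * U c := by
  induction w using TensorProduct.induction_on with
  | zero => simp
  | tmul p q =>
      ext s t
      rw [TensorProduct.map_tmul]
      simp only [Mm_apply, ent_tmul, LinearMap.mulRight_apply, LinearMap.id_apply,
        Matrix.mul_apply, map_mul]
      rw [Finset.mul_sum]
      exact Finset.sum_congr rfl fun k _ => by ring
  | add w w' hw hw' => simp only [map_add, hw, hw', add_mul]

theorem Mm_innerL (U : A →ₐ[K] Matrix (Fin n) (Fin n) An) (a : A) (i j s t : Fin n)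
    (w : A ⊗[K] A) :
    Mm U i j ((TensorProduct.comm K A A) ((TensorProduct.map (LinearMap.mulLeft K a)
        LinearMap.id) ((TensorProduct.comm K A A) w))) s t
      = ∑ k : Fin n, U a i k * Mm U k j w s t := by
  induction w using TensorProduct.induction_on with
  | zero => simp
  | tmul p q =>
      rw [TensorProduct.comm_tmul, TensorProduct.map_tmul, TensorProduct.comm_tmul]
      simp only [Mm_apply, ent_tmul, LinearMap.mulLeft_apply, LinearMap.id_apply, map_mul,
        Matrix.mul_apply]
      rw [Finset.mul_sum]
      exact Finset.sum_congr rfl fun k _ => by ring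
  | add w w' hw hw' =>
      simp only [map_add, Matrix.add_apply, hw, hw', ← Finset.sum_add_distrib, mul_add]

theorem Mm_innerR (U : A →ₐ[K] Matrix (Fin n) (Fin n) An) (b : A) (i j s t : Fin n)
    (w : A ⊗[K] A) :
    Mm U i j ((TensorProduct.comm K A A) ((TensorProduct.map LinearMap.id
        (LinearMap.mulRight K b)) ((TensorProduct.comm K A A) w))) s t
      = ∑ k : Fin n, U b k j * Mm U i k w s t := by
  induction w using TensorProduct.induction_on with
  | zero => simp
  | tmul p q =>
      rw [TensorProduct.comm_tmul, TensorProduct.map_tmul, TensorProduct.comm_tmul]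
      simp only [Mm_apply, ent_tmul, LinearMap.mulRight_apply, LinearMap.id_apply, map_mul,
        Matrix.mul_apply]
      rw [Finset.sum_mul]
      exact Finset.sum_congr rfl fun k _ => by ring
  | add w w' hw hw' =>
      simp only [map_add, Matrix.add_apply, hw, hw', ← Finset.sum_add_distrib, mul_add]

theorem br_mul_left (D : DoubleBracket K A) (a b c : A) :
    D.br (a*b) c
      = (TensorProduct.comm K A A) ((TensorProduct.map (LinearMap.mulLeft K a)
          LinearMap.id) ((TensorProduct.comm K A A) (D.br b c)))
        + (TensorProduct.comm K A A) ((TensorProduct.map LinearMap.id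
          (LinearMap.mulRight K b)) ((TensorProduct.comm K A A) (D.br a c))) := by
  have h1 := D.antisymm c (a*b)
  have h2 := D.antisymm b c
  have h3 := D.antisymm a c
  rw [h1, D.leibniz c a b, h2, h3]
  simp only [map_add, map_neg, neg_add, neg_neg]

theorem comm_br (D : DoubleBracket K A) (x y : A) :
    (TensorProduct.comm K A A) (D.br x y) = - D.br y x := by
  rw [D.antisymm x y, neg_neg]


theorem adjoin_top
    (Ψ : ∀ (C : Type v) [CommRing C] [Algebra K C],
        (An →ₐ[K] C) ≃ (A →ₐ[K] Matrix (Fin n) (Fin n) C))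
    (hΨnat : ∀ (C : Type v) [CommRing C] [Algebra K C] (C' : Type v) [CommRing C']
        [Algebra K C'] (h : C →ₐ[K] C') (g : An →ₐ[K] C),
        Ψ C' (h.comp g) = (AlgHom.mapMatrix h).comp (Ψ C g)) :
    Algebra.adjoin K {x : An |
        ∃ (a : A) (i j : Fin n), x = (Ψ An (AlgHom.id K An)) a i j} = ⊤ := by
  set U : A →ₐ[K] Matrix (Fin n) (Fin n) An := Ψ An (AlgHom.id K An) with hU
  set S : Set An := {x : An | ∃ (a : A) (i j : Fin n), x = U a i j} with hS
  set B : Subalgebra K An := Algebra.adjoin K S with hB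
  have hmem : ∀ (a : A) (i j : Fin n), U a i j ∈ B :=
    fun a i j => Algebra.subset_adjoin ⟨a, i, j, rfl⟩
  let U' : A →ₐ[K] Matrix (Fin n) (Fin n) B :=
  { toFun := fun a => Matrix.of fun i j => (⟨U a i j, hmem a i j⟩ : B)
    map_one' := by
      ext i j
      show (U 1 i j : An) = ((1 : Matrix (Fin n) (Fin n) B) i j : An)
      rw [map_one]
      by_cases h : i = j <;> simp [Matrix.one_apply, h]
    map_mul' := fun a b => by
      ext i j
      show (U (a*b) i j : An) = ((_ * _ : Matrix (Fin n) (Fin n) B) i j : An)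
      rw [map_mul]
      simp [Matrix.mul_apply]
    map_zero' := by
      ext i j
      show (U 0 i j : An) = ((0 : Matrix (Fin n) (Fin n) B) i j : An)
      simp
    map_add' := fun a b => by
      ext i j
      show (U (a+b) i j : An) = ((_ + _ : Matrix (Fin n) (Fin n) B) i j : An)
      rw [map_add]
      simp
    commutes' := fun c => by
      ext i j
      show (U (algebraMap K A c) i j : An)
        = ((algebraMap K (Matrix (Fin n) (Fin n) B) c) i j : An)
      rw [AlgHom.commutes]
      by_cases h : i = j <;>
        simp [Matrix.algebraMap_eq_diagonal, Matrix.diagonal_apply, h, Algebra.algebraMap_ofSubsemiring_apply] }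
  have hU'entry : ∀ (a : A) (i j : Fin n), (B.val) (U' a i j) = U a i j := fun a i j => rfl
  set g : An →ₐ[K] B := (Ψ B).symm U' with hg
  have hΨg : Ψ B g = U' := (Ψ B).apply_symm_apply U'
  have hnat := hΨnat B An B.val g
  rw [hΨg] at hnat
  have hval : Ψ An (B.val.comp g) = U := by
    rw [hnat]
    ext a i j
    exact hU'entry a i j
  have : B.val.comp g = AlgHom.id K An := by
    apply (Ψ An).injective
    rw [hval, hU]
  have hsurj : ∀ x : An, x ∈ B := by
    intro x
    have hx : B.val (g x) = x := by
      have := congrArg (fun f => f x) this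
      simpa using this
    exact hx ▸ (g x).2
  exact Algebra.eq_top_iff.mpr hsurj

theorem existsDer
    (Ψ : ∀ (C : Type v) [CommRing C] [Algebra K C],
        (An →ₐ[K] C) ≃ (A →ₐ[K] Matrix (Fin n) (Fin n) C))
    (hΨnat : ∀ (C : Type v) [CommRing C] [Algebra K C] (C' : Type v) [CommRing C']
        [Algebra K C'] (h : C →ₐ[K] C') (g : An →ₐ[K] C),
        Ψ C' (h.comp g) = (AlgHom.mapMatrix h).comp (Ψ C g))
    (δ : A →ₗ[K] Matrix (Fin n) (Fin n) An)
    (hδ : ∀ a b : A, δ (a*b) = ((Ψ An (AlgHom.id K An)) a) * δ b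
        + δ a * ((Ψ An (AlgHom.id K An)) b)) :
    ∃ D : Derivation K An An, ∀ (a : A) (i j : Fin n),
      D ((Ψ An (AlgHom.id K An)) a i j) = δ a i j := by
  set U : A →ₐ[K] Matrix (Fin n) (Fin n) An := Ψ An (AlgHom.id K An) with hU
  have hδ1 : δ 1 = 0 := by
    have h0 := hδ 1 1
    rw [mul_one, (map_one U), one_mul, mul_one] at h0
    exact (left_eq_add.mp h0)
  set C := TrivSqZeroExt An An with hC
  let φ : A →ₐ[K] Matrix (Fin n) (Fin n) C :=
  { toFun := fun a => Matrix.of fun i j => ((U a i j, δ a i j) : C)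
    map_one' := by
      ext i j
      · show (U 1 i j) = ((1 : Matrix (Fin n) (Fin n) C) i j).fst
        rw [map_one]
        by_cases h : i = j <;>
          simp [Matrix.one_apply, h, TrivSqZeroExt.fst_one]
      · show (δ 1 i j) = ((1 : Matrix (Fin n) (Fin n) C) i j).snd
        rw [hδ1]
        by_cases h : i = j <;>
          simp [Matrix.one_apply, h, TrivSqZeroExt.snd_one]
    map_mul' := fun a b => by
      ext i j
      · show (U (a*b) i j) = ((_ * _ : Matrix (Fin n) (Fin n) C) i j).fst
        rw [map_mul]
        rw [Matrix.mul_apply, Matrix.mul_apply, TrivSqZeroExt.fst_sum]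
        exact Finset.sum_congr rfl fun k _ => rfl
      · show (δ (a*b) i j) = ((_ * _ : Matrix (Fin n) (Fin n) C) i j).snd
        rw [hδ a b]
        rw [Matrix.mul_apply, TrivSqZeroExt.snd_sum]
        rw [Matrix.add_apply, Matrix.mul_apply, Matrix.mul_apply,
          ← Finset.sum_add_distrib]
        refine Finset.sum_congr rfl fun k _ => ?_
        rfl
    map_zero' := by
      ext i j
      · show (U 0 i j) = ((0 : Matrix (Fin n) (Fin n) C) i j).fst
        simp
      · show (δ 0 i j) = ((0 : Matrix (Fin n) (Fin n) C) i j).snd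
        simp
    map_add' := fun a b => by
      ext i j
      · show (U (a+b) i j) = ((_ + _ : Matrix (Fin n) (Fin n) C) i j).fst
        rw [map_add]
        rfl
      · show (δ (a+b) i j) = ((_ + _ : Matrix (Fin n) (Fin n) C) i j).snd
        rw [map_add]
        rfl
    commutes' := fun c => by
      have h1 : algebraMap K A c = (c • (1:A)) := Algebra.algebraMap_eq_smul_one c
      ext i j
      · show (U (algebraMap K A c) i j)
          = ((algebraMap K (Matrix (Fin n) (Fin n) C) c) i j).fst
        rw [AlgHom.commutes]
        by_cases h : i = j <;>
          simp [Matrix.algebraMap_eq_diagonal, Matrix.diagonal_apply, h,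
            TrivSqZeroExt.algebraMap_eq_inl' (R := An) (M := An) (S := K),
            TrivSqZeroExt.fst_inl]
        rfl
      · show (δ (algebraMap K A c) i j)
          = ((algebraMap K (Matrix (Fin n) (Fin n) C) c) i j).snd
        rw [h1, map_smul, hδ1]
        by_cases h : i = j <;>
          simp [Matrix.algebraMap_eq_diagonal, Matrix.diagonal_apply, h,
            TrivSqZeroExt.algebraMap_eq_inl' (R := An) (M := An) (S := K),
            TrivSqZeroExt.snd_inl]
        rfl }
  set g : An →ₐ[K] C := (Ψ C).symm φ with hg
  have hΨg : Ψ C g = φ := (Ψ C).apply_symm_apply φ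
  have hfst : (TrivSqZeroExt.fstHom K An An).comp g = AlgHom.id K An := by
    apply (Ψ An).injective
    rw [hΨnat C An (TrivSqZeroExt.fstHom K An An) g, hΨg]
    ext a i j
    rfl
  have hfst' : ∀ x : An, (g x).fst = x := fun x => by
    have := congrArg (fun f => f x) hfst
    simpa using this
  have hgen : ∀ (a : A) (i j : Fin n), g (U a i j) = φ a i j := by
    intro a i j
    have h2 := hΨnat An C g (AlgHom.id K An)
    rw [AlgHom.comp_id, hg, (Ψ C).apply_symm_apply] at h2
    calc g (U a i j) = ((AlgHom.mapMatrix g).comp (Ψ An (AlgHom.id K An)) a) i j := rfl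
    _ = φ a i j := by rw [← h2]
  let D0 : An →ₗ[K] An :=
  { toFun := fun x => (g x).snd
    map_add' := fun x y => by
      show (g (x + y)).snd = (g x).snd + (g y).snd
      rw [map_add]
      rfl
    map_smul' := fun c x => by
      show (g (c • x)).snd = c • (g x).snd
      rw [map_smul]
      rfl }
  have h1 : D0 1 = 0 := by
    show (g 1).snd = 0
    rw [map_one]
    rfl
  have h2 : ∀ x y : An, D0 (x * y) = x • D0 y + y • D0 x := by
    intro x y
    show (g (x*y)).snd = x • (g y).snd + y • (g x).snd
    rw [map_mul, TrivSqZeroExt.snd_mul, hfst' x, hfst' y]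
    show x * (g y).snd + (g x).snd * y = x * (g y).snd + y * (g x).snd
    rw [mul_comm ((g x).snd) y]
  refine ⟨Derivation.mk D0 h1 h2, ?_⟩
  intro a i j
  show (g (U a i j)).snd = δ a i j
  rw [hgen a i j]
  rfl

end AuxiliaryLemmas
set_option maxHeartbeats 1600000 in
/-- Let `(A,⦃-,-⦄)` be a double Poisson algebra and let `Aₙ`
corepresent the `n`-dimensional representation functor, with natural bijections
`Ψ_C : Hom(Aₙ,C) ≃ Hom(A,Mₙ(C))` and universal representation `u = Ψ_{Aₙ}(id)`, writing
`a_{ij} = (u a)_{ij}`. Then (a) `Aₙ` is generated as a `K`-algebra by the `a_{ij}`;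
(b) there is a unique Poisson bracket on `Aₙ` (antisymmetric, Jacobi, Leibniz) with
`{a_{ij}, b_{uv}} = T_{u,j,i,v}(⦃a,b⦄)`, where `T_{u,j,i,v} : A⊗A → Aₙ` is the
`K`-linear map determined by `p⊗q ↦ (u p)_{uj}·(u q)_{iv}`. -/
theorem statement_15 (K : Type u) [Field K] [CharZero K] (A : Type v) [Ring A] [Algebra K A]
    (D : DoubleBracket K A) (hD : D.IsPoisson)
    (n : ℕ) (hn : 0 < n)
    (An : Type v) [CommRing An] [Algebra K An]
    (Ψ : ∀ (C : Type v) [CommRing C] [Algebra K C],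
        (An →ₐ[K] C) ≃ (A →ₐ[K] Matrix (Fin n) (Fin n) C))
    (hΨnat : ∀ (C : Type v) [CommRing C] [Algebra K C] (C' : Type v) [CommRing C']
        [Algebra K C'] (h : C →ₐ[K] C') (g : An →ₐ[K] C),
        Ψ C' (h.comp g) = (AlgHom.mapMatrix h).comp (Ψ C g)) :
    (Algebra.adjoin K {x : An |
        ∃ (a : A) (i j : Fin n), x = (Ψ An (AlgHom.id K An)) a i j} = ⊤)
    ∧ ∃! Pb : An →ₗ[K] An →ₗ[K] An,
        (∀ α β, Pb α β = - Pb β α)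
        ∧ (∀ α β γ, Pb α (Pb β γ) = Pb (Pb α β) γ + Pb β (Pb α γ))
        ∧ (∀ α β γ, Pb α (β * γ) = Pb α β * γ + β * Pb α γ)
        ∧ (∀ (a b : A) (i j u' v' : Fin n),
            ∀ T : A ⊗[K] A →ₗ[K] An,
              (∀ p q : A, T (p ⊗ₜ[K] q)
                  = (Ψ An (AlgHom.id K An)) p u' j * (Ψ An (AlgHom.id K An)) q i v') →
              Pb ((Ψ An (AlgHom.id K An)) a i j) ((Ψ An (AlgHom.id K An)) b u' v')
                = T (D.br a b)) := by
  classical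
  set U : A →ₐ[K] Matrix (Fin n) (Fin n) An := Ψ An (AlgHom.id K An) with hU
  have hTop : Algebra.adjoin K {x : An | ∃ (a : A) (i j : Fin n), x = U a i j} = ⊤ :=
    adjoin_top Ψ hΨnat
  refine ⟨hTop, ?_⟩
  have hx : ∀ x : An,
      x ∈ Algebra.adjoin K {x : An | ∃ (a : A) (i j : Fin n), x = U a i j} := by
    intro x; rw [hTop]; exact Algebra.mem_top
  have derext : ∀ (E E' : Derivation K An An),
      (∀ (a : A) (i j : Fin n), E (U a i j) = E' (U a i j)) → E = E' := by
    intro E E' h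
    refine Derivation.ext_of_adjoin_eq_top _ hTop ?_
    rintro x ⟨a, i, j, rfl⟩
    exact h a i j
  have dsum_apply : ∀ (f : Fin n → Derivation K An An) (x : An),
      (∑ k, f k) x = ∑ k, f k x := by
    intro f x
    have h2 : ⇑(∑ k, f k) = ∑ k, ⇑(f k) :=
      map_sum (Derivation.coeFnAddMonoidHom (R := K) (A := An) (M := An)) f Finset.univ
    rw [show ((∑ k, f k) x) = (⇑(∑ k, f k)) x from rfl, h2, Finset.sum_apply]
  -- the derivations `{a_ij, -}`
  have hδgood : ∀ (a : A) (i j : Fin n), ∀ b c : A,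
      ((Mm U i j).comp (D.br a)) (b * c)
        = U b * ((Mm U i j).comp (D.br a)) c + ((Mm U i j).comp (D.br a)) b * U c := by
    intro a i j b c
    simp only [LinearMap.comp_apply]
    rw [D.leibniz a b c, map_add, Mm_mapL, Mm_mapR]
  choose D1 hD1 using fun (a : A) (i : Fin n) (j : Fin n) =>
    existsDer Ψ hΨnat ((Mm U i j).comp (D.br a)) (hδgood a i j)
  have hD1' : ∀ (a : A) (i j : Fin n) (b : A) (u' v' : Fin n),
      D1 a i j (U b u' v') = ent U u' j i v' (D.br a b) := fun a i j b u' v' =>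
    hD1 a i j b u' v'
  have hD1add : ∀ (a a' : A) (i j : Fin n), D1 (a + a') i j = D1 a i j + D1 a' i j := by
    intro a a' i j
    apply derext
    intro b u' v'
    rw [Derivation.add_apply, hD1', hD1', hD1', map_add D.br, LinearMap.add_apply, map_add]
  have hD1smul : ∀ (c : K) (a : A) (i j : Fin n), D1 (c • a) i j = c • D1 a i j := by
    intro c a i j
    apply derext
    intro b u' v'
    rw [Derivation.smul_apply, hD1', hD1', map_smul D.br, LinearMap.smul_apply, map_smul]
  have hD1mul : ∀ (a b : A) (i j : Fin n),
      D1 (a * b) i j = ∑ k : Fin n, (U a i k • D1 b k j + U b k j • D1 a i k) := by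
    intro a b i j
    apply derext
    intro c s t
    rw [dsum_apply, hD1']
    rw [show ent U s j i t (D.br (a*b) c) = Mm U i j (D.br (a*b) c) s t from rfl,
      br_mul_left D a b c, map_add, Matrix.add_apply, Mm_innerL, Mm_innerR,
      ← Finset.sum_add_distrib]
    refine Finset.sum_congr rfl fun k _ => ?_
    rw [Derivation.add_apply, Derivation.smul_apply, Derivation.smul_apply, hD1', hD1',
      smul_eq_mul, smul_eq_mul]
    rfl
  -- the derivations `{-, β}`
  have hDd0 : ∀ β : An, ∃ E : Derivation K An An,
      ∀ (a : A) (i j : Fin n), E (U a i j) = D1 a i j β := by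
    intro β
    obtain ⟨E, hE⟩ := existsDer Ψ hΨnat
      ({ toFun := fun a => Matrix.of fun i j => D1 a i j β
         map_add' := fun a a' => by
           ext i j
           show D1 (a + a') i j β = D1 a i j β + D1 a' i j β
           rw [hD1add, Derivation.add_apply]
         map_smul' := fun c a => by
           ext i j
           show D1 (c • a) i j β = c • D1 a i j β
           rw [hD1smul, Derivation.smul_apply] } : A →ₗ[K] Matrix (Fin n) (Fin n) An)
      (by
        intro a b
        ext i j
        show D1 (a * b) i j β
          = (U a * Matrix.of (fun i j => D1 b i j β)
              + Matrix.of (fun i j => D1 a i j β) * U b) i j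
        rw [hD1mul, dsum_apply, Matrix.add_apply, Matrix.mul_apply, Matrix.mul_apply,
          ← Finset.sum_add_distrib]
        refine Finset.sum_congr rfl fun k _ => ?_
        rw [Derivation.add_apply, Derivation.smul_apply, Derivation.smul_apply,
          smul_eq_mul, smul_eq_mul, Matrix.of_apply, Matrix.of_apply,
          mul_comm (D1 a i k β) (U b k j)])
    exact ⟨E, fun a i j => hE a i j⟩
  choose Dd hDd using hDd0
  have hβadd : ∀ β β' : An, Dd (β + β') = Dd β + Dd β' := by
    intro β β'
    apply derext
    intro a i j
    rw [hDd, Derivation.add_apply, hDd, hDd, map_add]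
  have hβsmul : ∀ (c : K) (β : An), Dd (c • β) = c • Dd β := by
    intro c β
    apply derext
    intro a i j
    rw [hDd, Derivation.smul_apply, hDd, Derivation.map_smul]
  set Pb : An →ₗ[K] An →ₗ[K] An := LinearMap.mk₂ K (fun α β => Dd β α)
    (fun α α' β => by show Dd β (α + α') = Dd β α + Dd β α'; rw [map_add])
    (fun c α β => by show Dd β (c • α) = c • Dd β α; rw [Derivation.map_smul])
    (fun α β β' => by show Dd (β + β') α = Dd β α + Dd β' α
                      rw [hβadd, Derivation.add_apply])
    (fun c α β => by show Dd (c • β) α = c • Dd β α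
                     rw [hβsmul, Derivation.smul_apply]) with hPb
  have hPbdef : ∀ α β, Pb α β = Dd β α := fun _ _ => rfl
  have hPgen : ∀ (a : A) (i j : Fin n) (b : A) (u' v' : Fin n),
      Pb (U a i j) (U b u' v') = ent U u' j i v' (D.br a b) := by
    intro a i j b u' v'
    rw [hPbdef, hDd, hD1']
  have hPgen' : ∀ (a : A) (i j : Fin n) (β : An), Pb (U a i j) β = D1 a i j β := by
    intro a i j β
    rw [hPbdef, hDd]
  have hL1 : ∀ α α' β, Pb (α * α') β = α * Pb α' β + Pb α β * α' := by
    intro α α' β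
    rw [hPbdef, hPbdef, hPbdef, Derivation.leibniz, smul_eq_mul, smul_eq_mul,
      mul_comm α' (Dd β α)]
  have hβmul : ∀ β β' : An, Dd (β * β') = β' • Dd β + β • Dd β' := by
    intro β β'
    apply derext
    intro a i j
    rw [hDd, Derivation.add_apply, Derivation.smul_apply, Derivation.smul_apply, hDd, hDd,
      Derivation.leibniz]
    simp only [smul_eq_mul]
    ring
  have hL2 : ∀ α β β', Pb α (β * β') = Pb α β * β' + β * Pb α β' := by
    intro α β β'
    rw [hPbdef, hβmul, Derivation.add_apply, Derivation.smul_apply, Derivation.smul_apply,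
      hPbdef, hPbdef, smul_eq_mul, smul_eq_mul, mul_comm (β' : An) (Dd β α)]
  have hPb1r : ∀ α, Pb α 1 = 0 := by
    intro α
    have h := hL2 α 1 1
    rw [mul_one, mul_one, one_mul] at h
    exact (left_eq_add.mp h)
  have halgr : ∀ α c, Pb α (algebraMap K An c) = 0 := by
    intro α c
    rw [Algebra.algebraMap_eq_smul_one, map_smul, hPb1r, smul_zero]
  have hPb1l : ∀ β, Pb 1 β = 0 := fun β => (Dd β).map_one_eq_zero
  have hPb0r : ∀ α, Pb α 0 = 0 := fun α => map_zero (Pb α)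
  have hPb0l : ∀ β, Pb 0 β = 0 := fun β => by rw [map_zero Pb]; rfl
  have halgl : ∀ c β, Pb (algebraMap K An c) β = 0 := by
    intro c β
    rw [Algebra.algebraMap_eq_smul_one, map_smul Pb, LinearMap.smul_apply, hPb1l, smul_zero]
  -- antisymmetry
  have hanti1 : ∀ (a : A) (i j : Fin n) (β : An), Pb (U a i j) β = - Pb β (U a i j) := by
    intro a i j β
    have h : D1 a i j = -(Dd (U a i j)) := by
      apply derext
      intro b u' v'
      rw [Derivation.neg_apply, hDd, hD1', hD1']
      rw [D.antisymm a b, map_neg, ent_comm, neg_neg]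
    rw [hPgen' a i j β, h, Derivation.neg_apply, hPbdef]
  have Ed0 : ∀ β : An, ∃ E : Derivation K An An, ∀ x, E x = Pb β x := by
    intro β
    refine ⟨Derivation.mk (Pb β) (hPb1r β) (fun x y => ?_), fun x => rfl⟩
    show Pb β (x * y) = x • Pb β y + y • Pb β x
    rw [hL2, smul_eq_mul, smul_eq_mul]
    ring
  choose Ed hEd using Ed0
  have hanti : ∀ α β, Pb α β = - Pb β α := by
    intro α β
    have h : Dd β = -(Ed β) := by
      apply derext
      intro a i j
      rw [Derivation.neg_apply, hEd, ← hPbdef, hanti1]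
    rw [hPbdef, h, Derivation.neg_apply, hEd]
  -- Jacobi identity on generators
  have IdentAC : ∀ (x : A) (i j i2 j2 i3 j3 : Fin n) (w : A ⊗[K] A),
      Pb (U x i j) (ent U i2 j2 i3 j3 w)
        = tri U i2 j i j2 i3 j3 ((LinearMap.rTensor A (D.br x)) w)
          + tri U i2 j2 i3 j i j3 (cyc K A ((LinearMap.rTensor A (D.br x))
              ((TensorProduct.comm K A A) w))) := by
    intro x i j i2 j2 i3 j3 w
    induction w using TensorProduct.induction_on with
    | zero => simp
    | tmul p q =>
        rw [ent_tmul, hL2, hPgen, hPgen, TensorProduct.comm_tmul, LinearMap.rTensor_tmul,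
          LinearMap.rTensor_tmul, tri_tmul, tri_cyc_tmul]
    | add w w' hw hw' =>
        simp only [map_add, hw, hw']
        ring
  have IdentB : ∀ (c : A) (s t u' v' i j : Fin n) (w : A ⊗[K] A),
      Pb (ent U u' j i v' w) (U c s t)
        = -(tri U s j i v' u' t (cyc K A (cyc K A ((LinearMap.rTensor A (D.br c)) w))))
          - tri U s v' u' j i t (cyc K A (cyc K A ((LinearMap.rTensor A (D.br c))
              ((TensorProduct.comm K A A) w)))) := by
    intro c s t u' v' i j w
    induction w using TensorProduct.induction_on with
    | zero => simp
    | tmul x y =>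
        rw [ent_tmul, hL1, hPgen, hPgen, D.antisymm c y, D.antisymm c x, map_neg, map_neg,
          ent_comm, ent_comm, TensorProduct.comm_tmul, LinearMap.rTensor_tmul,
          LinearMap.rTensor_tmul, tri_cyc2_tmul, tri_cyc2_tmul]
        ring
    | add w w' hw hw' =>
        simp only [map_add, LinearMap.add_apply, hw, hw']
        ring
  have hjac_gen : ∀ (a : A) (i j : Fin n) (b : A) (u' v' : Fin n) (c : A) (s t : Fin n),
      Pb (U a i j) (Pb (U b u' v') (U c s t))
        = Pb (Pb (U a i j) (U b u' v')) (U c s t)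
          + Pb (U b u' v') (Pb (U a i j) (U c s t)) := by
    intro a i j b u' v' c s t
    have hΦ : tri U s j i v' u' t ((LinearMap.rTensor A (D.br a)) (D.br b c)
        + cyc K A ((LinearMap.rTensor A (D.br b)) (D.br c a))
        + cyc K A (cyc K A ((LinearMap.rTensor A (D.br c)) (D.br a b)))) = 0 := by
      rw [hD a b c]; exact map_zero _
    have hG : tri U s v' u' j i t ((LinearMap.rTensor A (D.br b)) (D.br a c)
        + cyc K A ((LinearMap.rTensor A (D.br a)) (D.br c b))
        + cyc K A (cyc K A ((LinearMap.rTensor A (D.br c)) (D.br b a)))) = 0 := by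
      rw [hD b a c]; exact map_zero _
    simp only [map_add] at hΦ hG
    rw [hPgen b u' v' c s t, hPgen a i j b u' v', hPgen a i j c s t,
      IdentAC a i j s v' u' t (D.br b c), IdentB c s t u' v' i j (D.br a b),
      IdentAC b u' v' s j i t (D.br a c), comm_br D b c, comm_br D a b, comm_br D a c]
    simp only [map_neg]
    linear_combination hΦ - hG
  -- extension of the Jacobi identity
  have jmulγ : ∀ α β γ γ' : An,
      Pb α (Pb β (γ * γ')) - Pb (Pb α β) (γ * γ') - Pb β (Pb α (γ * γ'))
        = (Pb α (Pb β γ) - Pb (Pb α β) γ - Pb β (Pb α γ)) * γ'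
          + γ * (Pb α (Pb β γ') - Pb (Pb α β) γ' - Pb β (Pb α γ')) := by
    intro α β γ γ'
    rw [hL2 β γ γ', hL2 α γ γ', map_add, map_add, hL2 α (Pb β γ) γ', hL2 α γ (Pb β γ'),
      hL2 (Pb α β) γ γ', hL2 β (Pb α γ) γ', hL2 β γ (Pb α γ')]
    ring
  have jmulβ : ∀ α β β' γ : An,
      Pb α (Pb (β * β') γ) - Pb (Pb α (β * β')) γ - Pb (β * β') (Pb α γ)
        = β * (Pb α (Pb β' γ) - Pb (Pb α β') γ - Pb β' (Pb α γ))
          + (Pb α (Pb β γ) - Pb (Pb α β) γ - Pb β (Pb α γ)) * β' := by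
    intro α β β' γ
    rw [hL1 β β' γ, hL2 α β β', map_add, hL2 α β (Pb β' γ), hL2 α (Pb β γ) β',
      hL1 β β' (Pb α γ)]
    rw [show Pb (Pb α β * β' + β * Pb α β') γ
        = Pb (Pb α β * β') γ + Pb (β * Pb α β') γ from by rw [map_add Pb, LinearMap.add_apply],
      hL1 (Pb α β) β' γ, hL1 β (Pb α β') γ]
    ring
  have jmulα : ∀ α α' β γ : An,
      Pb (α * α') (Pb β γ) - Pb (Pb (α * α') β) γ - Pb β (Pb (α * α') γ)
        = α * (Pb α' (Pb β γ) - Pb (Pb α' β) γ - Pb β (Pb α' γ))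
          + (Pb α (Pb β γ) - Pb (Pb α β) γ - Pb β (Pb α γ)) * α' := by
    intro α α' β γ
    rw [hL1 α α' (Pb β γ), hL1 α α' β, hL1 α α' γ]
    rw [show Pb (α * Pb α' β + Pb α β * α') γ
        = Pb (α * Pb α' β) γ + Pb (Pb α β * α') γ from by rw [map_add Pb, LinearMap.add_apply],
      hL1 α (Pb α' β) γ, hL1 (Pb α β) α' γ]
    rw [show Pb β (α * Pb α' γ + Pb α γ * α')
        = Pb β (α * Pb α' γ) + Pb β (Pb α γ * α') from map_add (Pb β) _ _,
      hL2 β α (Pb α' γ), hL2 β (Pb α γ) α']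
    rw [show Pb β α = -Pb α β from by rw [hanti β α],
      show Pb β α' = -Pb α' β from by rw [hanti β α']]
    ring
  have hjac1 : ∀ (a : A) (i j : Fin n) (b : A) (u' v' : Fin n) (γ : An),
      Pb (U a i j) (Pb (U b u' v') γ)
        = Pb (Pb (U a i j) (U b u' v')) γ + Pb (U b u' v') (Pb (U a i j) γ) := by
    intro a i j b u' v' γ
    induction hx γ using Algebra.adjoin_induction with
    | mem x h =>
        obtain ⟨c, s, t, rfl⟩ := h
        exact hjac_gen a i j b u' v' c s t
    | algebraMap r => simp [halgr, map_zero]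
    | add x y _ _ ihx ihy =>
        simp only [map_add]
        rw [ihx, ihy]
        ring
    | mul x y _ _ ihx ihy =>
        have ihx0 : Pb (U a i j) (Pb (U b u' v') x) - Pb (Pb (U a i j) (U b u' v')) x
            - Pb (U b u' v') (Pb (U a i j) x) = 0 := by linear_combination ihx
        have ihy0 : Pb (U a i j) (Pb (U b u' v') y) - Pb (Pb (U a i j) (U b u' v')) y
            - Pb (U b u' v') (Pb (U a i j) y) = 0 := by linear_combination ihy
        linear_combination jmulγ (U a i j) (U b u' v') x y + ihx0 * y + x * ihy0
  have hjac2 : ∀ (a : A) (i j : Fin n) (β γ : An),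
      Pb (U a i j) (Pb β γ)
        = Pb (Pb (U a i j) β) γ + Pb β (Pb (U a i j) γ) := by
    intro a i j β γ
    induction hx β using Algebra.adjoin_induction with
    | mem x h =>
        obtain ⟨b, u', v', rfl⟩ := h
        exact hjac1 a i j b u' v' γ
    | algebraMap r =>
        rw [halgl r γ, hPb0r, halgr (U a i j) r, halgl r (Pb (U a i j) γ), hPb0l]
        ring
    | add x y _ _ ihx ihy =>
        simp only [map_add, LinearMap.add_apply]
        rw [ihx, ihy]
        ring
    | mul x y _ _ ihx ihy =>
        have ihx0 : Pb (U a i j) (Pb x γ) - Pb (Pb (U a i j) x) γ - Pb x (Pb (U a i j) γ)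
            = 0 := by linear_combination ihx
        have ihy0 : Pb (U a i j) (Pb y γ) - Pb (Pb (U a i j) y) γ - Pb y (Pb (U a i j) γ)
            = 0 := by linear_combination ihy
        linear_combination jmulβ (U a i j) x y γ + x * ihy0 + ihx0 * y
  have hjac : ∀ α β γ : An,
      Pb α (Pb β γ) = Pb (Pb α β) γ + Pb β (Pb α γ) := by
    intro α β γ
    induction hx α using Algebra.adjoin_induction with
    | mem x h =>
        obtain ⟨a, i, j, rfl⟩ := h
        exact hjac2 a i j β γ
    | algebraMap r =>
        rw [halgl r (Pb β γ), halgl r β, halgl r γ, hPb0r β, hPb0l]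
        ring
    | add x y _ _ ihx ihy =>
        simp only [map_add, LinearMap.add_apply]
        rw [ihx, ihy]
        ring
    | mul x y _ _ ihx ihy =>
        have ihx0 : Pb x (Pb β γ) - Pb (Pb x β) γ - Pb β (Pb x γ) = 0 := by
          linear_combination ihx
        have ihy0 : Pb y (Pb β γ) - Pb (Pb y β) γ - Pb β (Pb y γ) = 0 := by
          linear_combination ihy
        linear_combination jmulα x y β γ + x * ihy0 + ihx0 * y
  -- conclusion
  refine ⟨Pb, ⟨hanti, hjac, hL2, ?_⟩, ?_⟩
  · -- the generator formula
    intro a b i j u' v' T hT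
    have hTe : ∀ w : A ⊗[K] A, T w = ent U u' j i v' w := by
      intro w
      induction w using TensorProduct.induction_on with
      | zero => rw [map_zero, map_zero]
      | tmul p q => rw [hT p q, ent_tmul]
      | add w w' hw hw' => rw [map_add, map_add, hw, hw']
    rw [hTe (D.br a b)]
    exact hPgen a i j b u' v'
  · -- uniqueness
    rintro Pb' ⟨h1', _h2', h3', h4'⟩
    have hgen' : ∀ (a : A) (i j : Fin n) (b : A) (u' v' : Fin n),
        Pb' (U a i j) (U b u' v') = ent U u' j i v' (D.br a b) :=
      fun a i j b u' v' => h4' a b i j u' v' (ent U u' j i v') (fun p q => rfl)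
    have hPb'1r : ∀ α, Pb' α 1 = 0 := by
      intro α
      have h := h3' α 1 1
      rw [mul_one, mul_one, one_mul] at h
      exact (left_eq_add.mp h)
    have halg'r : ∀ α c, Pb' α (algebraMap K An c) = 0 := by
      intro α c
      rw [Algebra.algebraMap_eq_smul_one, map_smul, hPb'1r, smul_zero]
    have halg'l : ∀ c β, Pb' (algebraMap K An c) β = 0 := by
      intro c β
      rw [h1', halg'r, neg_zero]
    have hL1' : ∀ α α' β, Pb' (α * α') β = α * Pb' α' β + Pb' α β * α' := by
      intro α α' β
      rw [h1' (α * α') β, h3' β α α', h1' β α, h1' β α']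
      ring
    have stage1 : ∀ (a : A) (i j : Fin n) (β : An),
        Pb' (U a i j) β = Pb (U a i j) β := by
      intro a i j β
      induction hx β using Algebra.adjoin_induction with
      | mem x h =>
          obtain ⟨b, u', v', rfl⟩ := h
          rw [hgen', hPgen]
      | algebraMap r => rw [halg'r, halgr]
      | add x y _ _ ihx ihy => rw [map_add, map_add, ihx, ihy]
      | mul x y _ _ ihx ihy => rw [h3', hL2, ihx, ihy]
    ext α β
    induction hx α using Algebra.adjoin_induction with
    | mem x h =>
        obtain ⟨a, i, j, rfl⟩ := h
        exact stage1 a i j β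
    | algebraMap r => rw [halg'l, halgl]
    | add x y _ _ ihx ihy =>
        rw [map_add Pb' x y, map_add Pb x y, LinearMap.add_apply, LinearMap.add_apply,
          ihx, ihy]
    | mul x y _ _ ihx ihy => rw [hL1', hL1, ihx, ihy]
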